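/- The point spectrum of the Cesàro operator C acting on ℂ^ℕ is exactly {1/n : n ∈ ℕ, n ≥ 1}, and each eigenvalue 1/m has the eigenvector Δe_m, where Δ_{nk} = (−1)^{k−1} binom(n−1,k−1). -/

import Mathlib

/-- The Cesàro operator on ℂ^ℕ (0-indexed). -/
noncomputable def cesaroOp (x : ℕ → ℂ) (n : ℕ) : ℂ :=
  (∑ i ∈ Finset.range (n + 1), x i) / (n + 1)

/-- The operator Δ (0-indexed). -/
noncomputable def deltaOp (x : ℕ → ℂ) (n : ℕ) : ℂ :=
  ∑ k ∈ Finset.range (n + 1), (-1 : ℂ) ^ k * (n.choose k : ℂ) * x k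

lemma hockey (m : ℕ) : ∀ n, ∑ i ∈ Finset.range (n + 1), i.choose m = (n + 1).choose (m + 1) := by
  intro n
  induction n with
  | zero => cases m <;> simp [Nat.choose_eq_zero_of_lt]
  | succ n ih =>
      rw [Finset.sum_range_succ, ih, Nat.choose_succ_succ (n + 1) m]
      simp only [Nat.succ_eq_add_one]
      omega

lemma delta_single (m n : ℕ) :
    deltaOp (Pi.single m 1) n = (-1 : ℂ) ^ m * (n.choose m : ℂ) := by
  unfold deltaOp
  simp only [Pi.single_apply, mul_ite, mul_one, mul_zero]
  rw [Finset.sum_ite_eq' (Finset.range (n + 1)) m]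
  by_cases h : m ≤ n
  · simp [Finset.mem_range, Nat.lt_succ_of_le h]
  · simp [Finset.mem_range, Nat.choose_eq_zero_of_lt (by omega : n < m), h]

lemma part2 (m : ℕ) : deltaOp (Pi.single m 1) ≠ 0 ∧
    cesaroOp (deltaOp (Pi.single m 1)) = (1 / ((m : ℂ) + 1)) • deltaOp (Pi.single m 1) := by
  have hm : ((m : ℂ) + 1) ≠ 0 := Nat.cast_add_one_ne_zero m
  constructor
  · intro h
    have h0 := congrFun h m
    rw [delta_single] at h0
    simp [Nat.choose_self] at h0
  · funext n
    have hn : ((n : ℂ) + 1) ≠ 0 := Nat.cast_add_one_ne_zero n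
    simp only [cesaroOp, Pi.smul_apply, smul_eq_mul, delta_single]
    rw [← Finset.mul_sum, ← Nat.cast_sum, hockey m n]
    have hkey : (((n + 1).choose (m + 1) : ℂ)) * ((m : ℂ) + 1)
        = ((n : ℂ) + 1) * (n.choose m : ℂ) := by
      have h1 := congrArg (Nat.cast (R := ℂ)) (Nat.add_one_mul_choose_eq n m)
      push_cast at h1
      linear_combination -h1
    field_simp
    linear_combination hkey

/-- σ_pt(C; ℂ^ℕ) = {1/m : m ≥ 1}, with eigenvector Δe_m for 1/m. -/
theorem stmt7 :
    (∀ lam : ℂ,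
      (∃ x : ℕ → ℂ, x ≠ 0 ∧ cesaroOp x = lam • x) ↔ ∃ m : ℕ, lam = 1 / ((m : ℂ) + 1)) ∧
      (∀ m : ℕ, deltaOp (Pi.single m 1) ≠ 0 ∧
        cesaroOp (deltaOp (Pi.single m 1)) =
          (1 / ((m : ℂ) + 1)) • deltaOp (Pi.single m 1)) := by
  refine ⟨fun lam => ⟨?_, ?_⟩, part2⟩
  · rintro ⟨x, hx, hC⟩
    by_contra hcon
    push_neg at hcon
    have key : ∀ n : ℕ, ∑ i ∈ Finset.range (n + 1), x i = lam * ((n : ℂ) + 1) * x n := by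
      intro n
      have h := congrFun hC n
      simp only [cesaroOp, Pi.smul_apply, smul_eq_mul] at h
      have hn : ((n : ℂ) + 1) ≠ 0 := Nat.cast_add_one_ne_zero n
      field_simp at h
      linear_combination h
    have hzero : ∀ n, x n = 0 := by
      intro n
      induction n with
      | zero =>
          have h0 := key 0
          norm_num [Finset.sum_range_one] at h0
          have h1 : lam ≠ 1 := by
            intro h; exact hcon 0 (by simp [h])
          have h2 : (lam - 1) * x 0 = 0 := by linear_combination h0.symm
          rcases mul_eq_zero.mp h2 with h | h
          · exact absurd (by linear_combination h) h1
          · exact h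
      | succ n ih =>
          have h1 := key (n + 1)
          rw [Finset.sum_range_succ, key n, ih] at h1
          push_cast at h1
          have hne : lam * ((n : ℂ) + 2) - 1 ≠ 0 := by
            intro h
            apply hcon (n + 1)
            have hn2 : (((n + 1 : ℕ) : ℂ)) + 1 ≠ 0 := Nat.cast_add_one_ne_zero (n + 1)
            rw [eq_div_iff hn2]
            push_cast
            linear_combination h
          have h2 : (lam * ((n : ℂ) + 2) - 1) * x (n + 1) = 0 := by linear_combination h1.symm
          rcases mul_eq_zero.mp h2 with h | h
          · exact absurd h hne
          · exact h
    exact hx (funext hzero)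
  · rintro ⟨m, rfl⟩
    exact ⟨deltaOp (Pi.single m 1), (part2 m).1, (part2 m).2⟩
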